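/- Consider the planar engagement kinematics with a pursuer under true proportional navigation: constants V_T, γ_T, c, differentiable functions r, θ, γ_P, V_P : ℝ → ℝ and a control a : ℝ → ℝ satisfying, on an interval I, r' = V_T cos(γ_T − θ) − V_P cos δ, r·θ' = V_T sin(γ_T − θ) − V_P sin δ, γ_P' = a·cos δ / V_P, and V_P' = a·sin δ, where δ = γ_P − θ. Define V_r = V_T cos(γ_T − θ) − V_P cos δ, V_θ = V_T sin(γ_T − θ) − V_P sin δ, Q = V_θ² + V_r² + 2c·V_r, and t_go = −r·(V_r + 2c)/Q. Then at every t ∈ I with r(t) > 0, V_P(t) ≠ 0 and Q(t) ≠ 0, t_go is differentiable with t_go'(t) = −1 + 2c·V_θ(t)²·(V_r(t) + 2c)/Q(t)² − (2·(V_r(t) + 2c)·V_θ(t)·r(t)/Q(t)²)·a(t). -/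

import Mathlib

/-- Deviation angle `δ = γ_P − θ`. -/
noncomputable def devAngle (θ γP : ℝ → ℝ) (t : ℝ) : ℝ := γP t - θ t

/-- Relative velocity component along the line of sight (time-varying pursuer speed). -/
noncomputable def VradT (VT γT : ℝ) (θ γP VP : ℝ → ℝ) (t : ℝ) : ℝ :=
  VT * Real.cos (γT - θ t) - VP t * Real.cos (devAngle θ γP t)

/-- Relative velocity component across the line of sight (time-varying pursuer speed). -/
noncomputable def VlosT (VT γT : ℝ) (θ γP VP : ℝ → ℝ) (t : ℝ) : ℝ :=
  VT * Real.sin (γT - θ t) - VP t * Real.sin (devAngle θ γP t)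

/-- `Q = V_θ² + V_r² + 2c·V_r`. -/
noncomputable def Qtpn (VT γT c : ℝ) (θ γP VP : ℝ → ℝ) (t : ℝ) : ℝ :=
  VlosT VT γT θ γP VP t ^ 2 + VradT VT γT θ γP VP t ^ 2 + 2 * c * VradT VT γT θ γP VP t

/-- True-proportional-navigation time-to-go `t_go = −r (V_r + 2c)/Q`. -/
noncomputable def tgoTPN (VT γT c : ℝ) (r θ γP VP : ℝ → ℝ) (t : ℝ) : ℝ :=
  -(r t * (VradT VT γT θ γP VP t + 2 * c)) / Qtpn VT γT c θ γP VP t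

/-- equation (23) of the paper: the derivative of the
true-proportional-navigation time-to-go along the engagement kinematics. -/
theorem tgoTPN_deriv
    (VT γT c : ℝ) (I : Set ℝ) (r θ γP VP a θd : ℝ → ℝ)
    (hr : ∀ t ∈ I, HasDerivAt r (VradT VT γT θ γP VP t) t)
    (hθ : ∀ t ∈ I, HasDerivAt θ (θd t) t)
    (hθd : ∀ t ∈ I, r t * θd t = VlosT VT γT θ γP VP t)
    (hγ : ∀ t ∈ I, HasDerivAt γP (a t * Real.cos (devAngle θ γP t) / VP t) t)
    (hVP : ∀ t ∈ I, HasDerivAt VP (a t * Real.sin (devAngle θ γP t)) t) :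
    ∀ t ∈ I, 0 < r t → VP t ≠ 0 → Qtpn VT γT c θ γP VP t ≠ 0 →
      HasDerivAt (tgoTPN VT γT c r θ γP VP)
        (-1 + 2 * c * VlosT VT γT θ γP VP t ^ 2 * (VradT VT γT θ γP VP t + 2 * c)
              / Qtpn VT γT c θ γP VP t ^ 2
          - (2 * (VradT VT γT θ γP VP t + 2 * c) * VlosT VT γT θ γP VP t * r t
              / Qtpn VT γT c θ γP VP t ^ 2) * a t) t := by
  intro t ht hrpos hVPne hQne
  have hθt := hθ t ht
  have hγt := hγ t ht
  have hVPt := hVP t ht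
  have hrt := hr t ht
  have hδd : HasDerivAt (devAngle θ γP)
      (a t * Real.cos (devAngle θ γP t) / VP t - θd t) t := hγt.sub hθt
  -- derivative of V_r
  have hVr : HasDerivAt (VradT VT γT θ γP VP)
      (VlosT VT γT θ γP VP t * θd t) t := by
    have h := ((hθt.const_sub γT).cos.const_mul VT).sub (hVPt.mul hδd.cos)
    have key : VlosT VT γT θ γP VP t * θd t
        = VT * (-Real.sin (γT - θ t) * -θd t)
          - (a t * Real.sin (devAngle θ γP t) * Real.cos (devAngle θ γP t)
            + VP t * (-Real.sin (devAngle θ γP t)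
              * (a t * Real.cos (devAngle θ γP t) / VP t - θd t))) := by
      field_simp [VlosT]
      unfold VlosT
      ring
    rw [key]; exact h
  -- derivative of V_θ
  have hVθ : HasDerivAt (VlosT VT γT θ γP VP)
      (-(VradT VT γT θ γP VP t * θd t) - a t) t := by
    have h := ((hθt.const_sub γT).sin.const_mul VT).sub (hVPt.mul hδd.sin)
    have key : -(VradT VT γT θ γP VP t * θd t) - a t
        = VT * (Real.cos (γT - θ t) * -θd t)
          - (a t * Real.sin (devAngle θ γP t) * Real.sin (devAngle θ γP t)
            + VP t * (Real.cos (devAngle θ γP t)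
              * (a t * Real.cos (devAngle θ γP t) / VP t - θd t))) := by
      have hs := Real.sin_sq_add_cos_sq (devAngle θ γP t)
      field_simp [VradT]
      unfold VradT
      linear_combination (a t) * hs
    rw [key]; exact h
  -- derivative of Q
  have hQ : HasDerivAt (Qtpn VT γT c θ γP VP)
      (2 * c * VlosT VT γT θ γP VP t * θd t - 2 * VlosT VT γT θ γP VP t * a t) t := by
    have h := ((hVθ.pow 2).add (hVr.pow 2)).add (hVr.const_mul (2 * c))
    have key : 2 * c * VlosT VT γT θ γP VP t * θd t - 2 * VlosT VT γT θ γP VP t * a t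
        = ((2 : ℕ) : ℝ) * VlosT VT γT θ γP VP t ^ (2 - 1)
            * (-(VradT VT γT θ γP VP t * θd t) - a t)
          + ((2 : ℕ) : ℝ) * VradT VT γT θ γP VP t ^ (2 - 1)
            * (VlosT VT γT θ γP VP t * θd t)
          + 2 * c * (VlosT VT γT θ γP VP t * θd t) := by
      push_cast
      ring
    rw [key]; exact h
  -- derivative of the numerator and of t_go
  have hnum := (hrt.mul (hVr.add_const (2 * c))).neg
  have htgo := hnum.div hQ hQne
  have hθdv : θd t = VlosT VT γT θ γP VP t / r t := by
    rw [eq_div_iff hrpos.ne', mul_comm]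
    exact hθd t ht
  have key : -1 + 2 * c * VlosT VT γT θ γP VP t ^ 2 * (VradT VT γT θ γP VP t + 2 * c)
              / Qtpn VT γT c θ γP VP t ^ 2
          - (2 * (VradT VT γT θ γP VP t + 2 * c) * VlosT VT γT θ γP VP t * r t
              / Qtpn VT γT c θ γP VP t ^ 2) * a t
      = (-(VradT VT γT θ γP VP t * (VradT VT γT θ γP VP t + 2 * c)
            + r t * (VlosT VT γT θ γP VP t * θd t)) * Qtpn VT γT c θ γP VP t
          - -(r t * (VradT VT γT θ γP VP t + 2 * c))
            * (2 * c * VlosT VT γT θ γP VP t * θd t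
              - 2 * VlosT VT γT θ γP VP t * a t))
        / Qtpn VT γT c θ γP VP t ^ 2 := by
    have hQ' : VlosT VT γT θ γP VP t ^ 2 + VradT VT γT θ γP VP t ^ 2
        + 2 * c * VradT VT γT θ γP VP t ≠ 0 := hQne
    rw [hθdv]
    simp only [Qtpn]
    field_simp
    ring
  rw [key]; exact htgo
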